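/- Let g : ℝ → ℝ be a C¹ nonnegative function of period 1. Then ∫₀¹ g(x)^{5/2} dx ≤ C (‖g'‖_{L²[0,1]} ‖g‖_{L¹[0,1]}^{3/2} + ‖g‖_{L¹[0,1]}^{5/2}) for some universal constant C > 0. -/

import Mathlib

open intervalIntegral

/-- Cauchy-Schwarz via AM-GM trick. -/
lemma cs_aux {u v : ℝ → ℝ} (hu : Continuous u) (hv : Continuous v) (hu0 : ∀ x, 0 ≤ u x) :
    (∫ x in (0:ℝ)..1, Real.sqrt (u x) * |v x|) ≤
      Real.sqrt (∫ x in (0:ℝ)..1, u x) * Real.sqrt (∫ x in (0:ℝ)..1, (v x) ^ 2) := by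
  set m := ∫ x in (0:ℝ)..1, u x with hmdef
  set E := ∫ x in (0:ℝ)..1, (v x) ^ 2 with hEdef
  have hm0 : 0 ≤ m := integral_nonneg (by norm_num) (fun x _ => hu0 x)
  have hE0 : 0 ≤ E := integral_nonneg (by norm_num) (fun x _ => sq_nonneg _)
  have hJc : Continuous fun x => Real.sqrt (u x) * |v x| :=
    (Real.continuous_sqrt.comp hu).mul hv.abs
  set J := ∫ x in (0:ℝ)..1, Real.sqrt (u x) * |v x| with hJdef
  have step : ∀ ε : ℝ, 0 < ε → J ≤ (1/(2*ε)) * m + (ε/2) * E := by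
    intro ε hε
    have hint : (∫ x in (0:ℝ)..1, ((1/(2*ε)) * u x + (ε/2) * (v x)^2))
        = (1/(2*ε)) * m + (ε/2) * E := by
      rw [integral_add (f := fun x => (1/(2*ε)) * u x) (g := fun x => (ε/2) * (v x)^2) ((continuous_const.mul hu).intervalIntegrable _ _)
          ((continuous_const.mul (hv.pow 2)).intervalIntegrable _ _),
        integral_const_mul, integral_const_mul]
    rw [hJdef, ← hint]
    apply integral_mono_on (by norm_num) (hJc.intervalIntegrable _ _)
      (((continuous_const.mul hu).add (continuous_const.mul (hv.pow 2))).intervalIntegrable _ _)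
    intro x _
    have h1 : Real.sqrt (u x) ^ 2 = u x := Real.sq_sqrt (hu0 x)
    have h2 : |v x| ^ 2 = (v x) ^ 2 := sq_abs _
    have key : Real.sqrt (u x) * |v x| ≤ (u x + ε^2 * (v x)^2) / (2*ε) := by
      rw [le_div_iff₀ (by positivity)]
      nlinarith [sq_nonneg (Real.sqrt (u x) - ε * |v x|)]
    calc Real.sqrt (u x) * |v x| ≤ (u x + ε^2 * (v x)^2) / (2*ε) := key
      _ = 1/(2*ε) * u x + ε/2 * (v x)^2 := by field_simp
  rcases eq_or_lt_of_le hE0 with hE | hE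
  · have : J ≤ 0 := by
      apply le_of_forall_pos_le_add
      intro δ hδ
      have := step ((m+1)/(2*δ)) (by positivity)
      rw [← hE] at this
      calc J ≤ 1 / (2 * ((m+1)/(2*δ))) * m + ((m+1)/(2*δ)/2) * 0 := this
        _ = m * δ / (m+1) := by rw [mul_zero, add_zero]; field_simp
        _ ≤ 0 + δ := by rw [zero_add, div_le_iff₀ (by positivity)]; nlinarith
    calc J ≤ 0 := this
      _ ≤ _ := by positivity
  rcases eq_or_lt_of_le hm0 with hm | hm
  · have : J ≤ 0 := by
      apply le_of_forall_pos_le_add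
      intro δ hδ
      have := step (2*δ/E) (by positivity)
      rw [← hm] at this
      calc J ≤ 1 / (2 * (2*δ/E)) * 0 + (2*δ/E/2) * E := this
        _ = 0 + δ := by rw [mul_zero, zero_add, zero_add]; field_simp
    calc J ≤ 0 := this
      _ ≤ _ := by positivity
  · have := step (Real.sqrt m / Real.sqrt E)
      (div_pos (Real.sqrt_pos.2 hm) (Real.sqrt_pos.2 hE))
    have hsm : Real.sqrt m > 0 := Real.sqrt_pos.2 hm
    have hsE : Real.sqrt E > 0 := Real.sqrt_pos.2 hE
    have hm2 : Real.sqrt m ^ 2 = m := Real.sq_sqrt hm0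
    have hE2 : Real.sqrt E ^ 2 = E := Real.sq_sqrt hE0
    calc J ≤ 1 / (2 * (Real.sqrt m / Real.sqrt E)) * m
          + (Real.sqrt m / Real.sqrt E / 2) * E := this
      _ = Real.sqrt m * Real.sqrt E := by
          field_simp
          nlinarith

theorem stmt_11 :
    ∃ C : ℝ, 0 < C ∧ ∀ g : ℝ → ℝ, ContDiff ℝ 1 g → (∀ x : ℝ, g (x + 1) = g x) →
      (∀ x : ℝ, 0 ≤ g x) →
      (∫ x in (0:ℝ)..1, (g x) ^ ((5:ℝ)/2)) ≤
        C * (Real.sqrt (∫ x in (0:ℝ)..1, (deriv g x) ^ 2)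
              * (∫ x in (0:ℝ)..1, g x) ^ ((3:ℝ)/2)
            + (∫ x in (0:ℝ)..1, g x) ^ ((5:ℝ)/2)) := by
  refine ⟨3, by norm_num, ?_⟩
  intro g hg _hper hpos
  have hgc : Continuous g := hg.continuous
  have hg'c : Continuous (deriv g) := hg.continuous_deriv le_rfl
  have hgd : ∀ x, HasDerivAt g (deriv g x) x := fun x =>
    ((hg.differentiable one_ne_zero) x).hasDerivAt
  set m := ∫ x in (0:ℝ)..1, g x with hmdef
  set E := ∫ x in (0:ℝ)..1, (deriv g x) ^ 2 with hEdef
  have hm0 : 0 ≤ m := integral_nonneg (by norm_num) fun x _ => hpos x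
  have hE0 : 0 ≤ E := integral_nonneg (by norm_num) fun x _ => sq_nonneg _
  set F : ℝ → ℝ := fun x => g x ^ ((3:ℝ)/2) with hFdef
  have hFc : Continuous F := hgc.rpow_const fun x => Or.inr (by norm_num)
  have hd : ∀ x, HasDerivAt F ((3/2) * Real.sqrt (g x) * deriv g x) x := by
    intro x
    have h1 : HasDerivAt (fun t : ℝ => t ^ ((3:ℝ)/2)) ((3:ℝ)/2 * g x ^ ((3:ℝ)/2 - 1)) (g x) :=
      Real.hasDerivAt_rpow_const (Or.inr (by norm_num))
    have h2 := h1.comp x (hgd x)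
    rw [show ((3:ℝ)/2 - 1) = 1/2 by norm_num, ← Real.sqrt_eq_rpow] at h2
    exact h2
  have hd'c : Continuous fun x => (3/2) * Real.sqrt (g x) * deriv g x :=
    (continuous_const.mul (Real.continuous_sqrt.comp hgc)).mul hg'c
  have habc : Continuous fun x => (3/2) * (Real.sqrt (g x) * |deriv g x|) :=
    continuous_const.mul ((Real.continuous_sqrt.comp hgc).mul hg'c.abs)
  set J := ∫ x in (0:ℝ)..1, Real.sqrt (g x) * |deriv g x| with hJdef
  have hJ0 : 0 ≤ J := integral_nonneg (by norm_num) fun x _ =>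
    mul_nonneg (Real.sqrt_nonneg _) (abs_nonneg _)
  have hJcs : J ≤ Real.sqrt m * Real.sqrt E := cs_aux hgc hg'c hpos
  obtain ⟨x₀, hx₀mem, hx₀⟩ := isCompact_Icc.exists_isMaxOn (Set.nonempty_Icc.2 zero_le_one)
    hFc.continuousOn
  set S := F x₀ with hSdef
  have hS0 : 0 ≤ S := Real.rpow_nonneg (hpos x₀) _
  have hmax : ∀ y ∈ Set.Icc (0:ℝ) 1, F y ≤ S := fun y hy => hx₀ hy
  have habsint : ∀ a b : ℝ, 0 ≤ a → a ≤ b → b ≤ 1 →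
      (∫ x in a..b, (3/2) * (Real.sqrt (g x) * |deriv g x|)) ≤ (3/2) * J := by
    intro a b ha hab hb
    have h1 := integral_mono_interval (μ := MeasureTheory.volume)
      (f := fun x => (3/2) * (Real.sqrt (g x) * |deriv g x|)) ha hab hb
      (Filter.Eventually.of_forall fun x => by positivity)
      (habc.intervalIntegrable _ _)
    rw [hJdef, ← integral_const_mul]
    exact h1
  have hftc : ∀ a b : ℝ, (∫ x in a..b, (3/2) * Real.sqrt (g x) * deriv g x) = F b - F a :=
    fun a b => integral_eq_sub_of_hasDerivAt (fun x _ => hd x) (hd'c.intervalIntegrable _ _)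
  have hkey : ∀ y ∈ Set.Icc (0:ℝ) 1, S - (3/2) * J ≤ F y := by
    intro y hy
    rcases le_total y x₀ with hc | hc
    · have e1 : S - F y = ∫ x in y..x₀, (3/2) * Real.sqrt (g x) * deriv g x := (hftc y x₀).symm
      have hle : (∫ x in y..x₀, (3/2) * Real.sqrt (g x) * deriv g x)
          ≤ ∫ x in y..x₀, (3/2) * (Real.sqrt (g x) * |deriv g x|) := by
        apply integral_mono_on hc (hd'c.intervalIntegrable _ _) (habc.intervalIntegrable _ _)
        intro x _
        have h1 := le_abs_self (deriv g x)
        have h0 := Real.sqrt_nonneg (g x)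
        nlinarith [mul_le_mul_of_nonneg_left h1 h0]
      have h2 := habsint y x₀ hy.1 hc hx₀mem.2
      linarith
    · have e1 : S - F y = ∫ x in x₀..y, -((3/2) * Real.sqrt (g x) * deriv g x) := by
        rw [integral_neg, hftc x₀ y]; ring
      have hle : (∫ x in x₀..y, -((3/2) * Real.sqrt (g x) * deriv g x))
          ≤ ∫ x in x₀..y, (3/2) * (Real.sqrt (g x) * |deriv g x|) := by
        apply integral_mono_on hc (hd'c.neg.intervalIntegrable _ _) (habc.intervalIntegrable _ _)
        intro x _
        simp only [Pi.neg_apply]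
        have h1 := neg_le_abs (deriv g x)
        have h0 := Real.sqrt_nonneg (g x)
        nlinarith [mul_le_mul_of_nonneg_left h1 h0]
      have h2 := habsint x₀ y hx₀mem.1 hc hy.2
      linarith
  have key1 : S ≤ (∫ x in (0:ℝ)..1, F x) + (3/2) * J := by
    have h1 := integral_mono_on (a := (0:ℝ)) (b := 1) (μ := MeasureTheory.volume)
      (f := fun _ => S - (3/2) * J) (by norm_num)
      intervalIntegrable_const (hFc.intervalIntegrable _ _) hkey
    rw [integral_const] at h1
    simp only [smul_eq_mul, sub_zero, one_mul] at h1
    linarith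
  have key2 : (∫ x in (0:ℝ)..1, F x) ≤ S ^ ((1:ℝ)/3) * m := by
    rw [hmdef, ← integral_const_mul]
    apply integral_mono_on (by norm_num) (hFc.intervalIntegrable _ _)
      ((continuous_const.mul hgc).intervalIntegrable _ _)
    intro y hy
    have h1 : F y ≤ S := hmax y hy
    have h2 : (F y) ^ ((1:ℝ)/3) ≤ S ^ ((1:ℝ)/3) :=
      Real.rpow_le_rpow (Real.rpow_nonneg (hpos y) _) h1 (by norm_num)
    have h3 : (F y) ^ ((1:ℝ)/3) = g y ^ ((1:ℝ)/2) := by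
      show (g y ^ ((3:ℝ)/2)) ^ ((1:ℝ)/3) = _
      rw [← Real.rpow_mul (hpos y)]; norm_num
    have h4 : F y = g y ^ ((1:ℝ)/2) * g y := by
      show g y ^ ((3:ℝ)/2) = _
      rw [show ((3:ℝ)/2) = 1/2 + 1 by norm_num, Real.rpow_add' (hpos y) (by norm_num),
        Real.rpow_one]
    rw [h4]
    exact mul_le_mul_of_nonneg_right (h3 ▸ h2) (hpos y)
  have key3 : S ≤ 3 * (Real.sqrt E * Real.sqrt m) + 3 * m ^ ((3:ℝ)/2) := by
    have hSm : S ≤ S ^ ((1:ℝ)/3) * m + (3/2) * (Real.sqrt m * Real.sqrt E) := by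
      have := mul_le_mul_of_nonneg_left hJcs (by norm_num : (0:ℝ) ≤ 3/2)
      linarith
    have hm32 : 0 ≤ m ^ ((3:ℝ)/2) := Real.rpow_nonneg hm0 _
    have hEm : 0 ≤ Real.sqrt E * Real.sqrt m :=
      mul_nonneg (Real.sqrt_nonneg _) (Real.sqrt_nonneg _)
    by_cases hc : S ^ ((1:ℝ)/3) * m ≤ S / 2
    · nlinarith
    · push_neg at hc
      rcases eq_or_lt_of_le hS0 with hS | hS
      · nlinarith
      have hS13 : 0 < S ^ ((1:ℝ)/3) := Real.rpow_pos_of_pos hS _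
      have h23 : S ^ ((2:ℝ)/3) < 2 * m := by
        have e1 : S ^ ((1:ℝ)/3) * S ^ ((2:ℝ)/3) = S := by
          rw [← Real.rpow_add hS]; norm_num
        have e2 : S ^ ((1:ℝ)/3) * S ^ ((2:ℝ)/3) < S ^ ((1:ℝ)/3) * (2 * m) := by
          rw [e1]; linarith
        exact lt_of_mul_lt_mul_left (by linarith) hS13.le
      have h5 : S ≤ (2 * m) ^ ((3:ℝ)/2) := by
        calc S = (S ^ ((2:ℝ)/3)) ^ ((3:ℝ)/2) := by
              rw [← Real.rpow_mul hS0]; norm_num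
          _ ≤ (2 * m) ^ ((3:ℝ)/2) :=
              Real.rpow_le_rpow (Real.rpow_nonneg hS0 _) h23.le (by norm_num)
      have h6 : (2 * m) ^ ((3:ℝ)/2) = 2 ^ ((3:ℝ)/2) * m ^ ((3:ℝ)/2) :=
        Real.mul_rpow (by norm_num) hm0
      have h7 : (2:ℝ) ^ ((3:ℝ)/2) ≤ 3 := by
        rw [show ((3:ℝ)/2) = 3 * (1/2) by norm_num,
          Real.rpow_mul (by norm_num : (0:ℝ) ≤ 2), ← Real.sqrt_eq_rpow,
          show ((3:ℝ)) = ((3:ℕ):ℝ) by norm_num, Real.rpow_natCast]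
        calc Real.sqrt (2 ^ 3) ≤ Real.sqrt 9 := Real.sqrt_le_sqrt (by norm_num)
          _ = 3 := by rw [show (9:ℝ) = 3 ^ 2 by norm_num, Real.sqrt_sq (by norm_num)]
      nlinarith
  have key5 : (∫ x in (0:ℝ)..1, g x ^ ((5:ℝ)/2)) ≤ S * m := by
    rw [hmdef, ← integral_const_mul]
    apply integral_mono_on (by norm_num)
      ((hgc.rpow_const fun x => Or.inr (by norm_num)).intervalIntegrable _ _)
      ((continuous_const.mul hgc).intervalIntegrable _ _)
    intro y hy
    rw [show ((5:ℝ)/2) = 3/2 + 1 by norm_num, Real.rpow_add' (hpos y) (by norm_num),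
      Real.rpow_one]
    exact mul_le_mul_of_nonneg_right (hmax y hy) (hpos y)
  have e1 : Real.sqrt m * m = m ^ ((3:ℝ)/2) := by
    rw [Real.sqrt_eq_rpow, show ((3:ℝ)/2) = 1/2 + 1 by norm_num,
      Real.rpow_add' hm0 (by norm_num), Real.rpow_one]
  have e2 : m ^ ((3:ℝ)/2) * m = m ^ ((5:ℝ)/2) := by
    rw [show ((5:ℝ)/2) = 3/2 + 1 by norm_num, Real.rpow_add' hm0 (by norm_num), Real.rpow_one]
  calc (∫ x in (0:ℝ)..1, g x ^ ((5:ℝ)/2)) ≤ S * m := key5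
    _ ≤ (3 * (Real.sqrt E * Real.sqrt m) + 3 * m ^ ((3:ℝ)/2)) * m :=
        mul_le_mul_of_nonneg_right key3 hm0
    _ = 3 * (Real.sqrt E * m ^ ((3:ℝ)/2) + m ^ ((5:ℝ)/2)) := by
        linear_combination (3 * Real.sqrt E) * e1 + 3 * e2
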